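/- Fix 0 < β < 1 and let κ₁(x) = 1/(1 − x²) for x ∈ (−1,1). Then for every integer n ≥ 1 and every x ∈ (−1,1): (T_β)ⁿ κ₁(x) ≤ 2βⁿ/(1 − β), where (T_β)ⁿ denotes the n-fold iterate of T_β (all the arising series of nonnegative terms converge). -/

import Mathlib

open Real

/-- The subtransfer operator `T_β` of the Gauss-type map `x ↦ {-β/x} mod 2ℤ`. -/
noncomputable def Tsub (β : ℝ) (f : ℝ → ℝ) (x : ℝ) : ℝ :=
  ∑' j : {j : ℤ // j ≠ 0},
    (β / (2 * ((j : ℤ) : ℝ) + x) ^ 2) * f (-β / (2 * ((j : ℤ) : ℝ) + x))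

section aux

lemma sq_gt_one' {x : ℝ} (hx1 : -1 < x) (hx2 : x < 1) {j : ℤ} (hj : j ≠ 0) :
    1 < (2 * (j : ℝ) + x) ^ 2 := by
  rcases lt_or_gt_of_ne hj with h | h
  · have hj' : (j : ℝ) ≤ -1 := by exact_mod_cast (by omega : j ≤ -1)
    nlinarith
  · have hj' : (1 : ℝ) ≤ (j : ℝ) := by exact_mod_cast h
    nlinarith

lemma sq_ge_sq' {x : ℝ} (hx1 : -1 < x) (hx2 : x < 1) {j : ℤ} (hj : j ≠ 0) :
    (j : ℝ) ^ 2 ≤ (2 * (j : ℝ) + x) ^ 2 := by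
  rcases lt_or_gt_of_ne hj with h | h
  · have hj' : (j : ℝ) ≤ -1 := by exact_mod_cast (by omega : j ≤ -1)
    nlinarith
  · have hj' : (1 : ℝ) ≤ (j : ℝ) := by exact_mod_cast h
    nlinarith

lemma tele_eq (h : ℤ → ℝ) (a : ℤ) : ∀ N : ℤ, a ≤ N →
    ∑ j ∈ Finset.Icc a N, (h j - h (j + 1)) = h a - h (N + 1) := by
  refine fun N hN => Int.le_induction
    (motive := fun N _ => ∑ j ∈ Finset.Icc a N, (h j - h (j + 1)) = h a - h (N + 1)) ?_ ?_ N hN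
  · show ∑ j ∈ Finset.Icc a a, (h j - h (j + 1)) = h a - h (a + 1)
    rw [Finset.Icc_self, Finset.sum_singleton]
  · intro N hN ih
    show ∑ j ∈ Finset.Icc a (N + 1), (h j - h (j + 1)) = h a - h (N + 1 + 1)
    have hins : Finset.Icc a (N + 1) = insert (N + 1) (Finset.Icc a N) := by
      ext k; simp only [Finset.mem_Icc, Finset.mem_insert]; omega
    rw [hins, Finset.sum_insert (by simp [Finset.mem_Icc]), ih]
    ring

/-- Telescoping bound over an integer finset bounded below. -/
lemma tele_int (h : ℤ → ℝ) (a : ℤ) (hnn : ∀ j, a ≤ j → 0 ≤ h j)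
    (hmono : ∀ j, a ≤ j → h (j + 1) ≤ h j) (P : Finset ℤ) (hP : ∀ j ∈ P, a ≤ j) :
    ∑ j ∈ P, (h j - h (j + 1)) ≤ h a := by
  rcases P.eq_empty_or_nonempty with rfl | hne
  · simpa using hnn a le_rfl
  · set M := P.max' hne with hM
    have haM : a ≤ M := hP _ (P.max'_mem hne)
    have key := tele_eq h a
    have hsub : P ⊆ Finset.Icc a M := fun j hj =>
      Finset.mem_Icc.2 ⟨hP _ hj, P.le_max' _ hj⟩
    calc ∑ j ∈ P, (h j - h (j + 1)) ≤ ∑ j ∈ Finset.Icc a M, (h j - h (j + 1)) := by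
          apply Finset.sum_le_sum_of_subset_of_nonneg hsub
          intro j hj _
          have haj := (Finset.mem_Icc.1 hj).1
          have := hmono j haj
          linarith
      _ = h a - h (M + 1) := key M haM
      _ ≤ h a := by
          have := hnn (M + 1) (by omega)
          linarith

/-- Key telescoping estimate for a finset of integers all `≥ a ≥ 1`. -/
lemma keyfin {x : ℝ} (hx1 : -1 < x) (hx2 : x < 1) (a : ℤ) (ha : 1 ≤ a)
    (P : Finset ℤ) (hP : ∀ j ∈ P, a ≤ j) :
    ∑ j ∈ P, 1 / ((2 * (j : ℝ) + x) ^ 2 - 1) ≤ 1 / (2 * (2 * (a : ℝ) + x - 1)) := by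
  have ha' : (1 : ℝ) ≤ (a : ℝ) := by exact_mod_cast ha
  set h : ℤ → ℝ := fun j => 1 / (2 * (j : ℝ) + x - 1) with hh
  have hden : ∀ j : ℤ, a ≤ j → 0 < 2 * (j : ℝ) + x - 1 := by
    intro j hj
    have hj' : (a : ℝ) ≤ (j : ℝ) := by exact_mod_cast hj
    nlinarith
  have hnn : ∀ j, a ≤ j → 0 ≤ h j := fun j hj => le_of_lt (one_div_pos.2 (hden j hj))
  have hmono : ∀ j, a ≤ j → h (j + 1) ≤ h j := by
    intro j hj
    apply one_div_le_one_div_of_le (hden j hj)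
    push_cast; linarith
  have heq : ∀ j ∈ P, 1 / ((2 * (j : ℝ) + x) ^ 2 - 1) = (1 / 2) * (h j - h (j + 1)) := by
    intro j hj
    have hj' := hden j (hP j hj)
    have h2 : 0 < 2 * (j : ℝ) + x + 1 := by linarith
    have h1 : (2 * (j : ℝ) + x - 1) ≠ 0 := ne_of_gt hj'
    have h1' : (2 * (j : ℝ) + x + 1) ≠ 0 := ne_of_gt h2
    have e2 : h (j + 1) = 1 / (2 * (j : ℝ) + x + 1) := by
      simp only [hh]; congr 1; push_cast; ring
    have e1 : h j = 1 / (2 * (j : ℝ) + x - 1) := rfl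
    have h3 : (2 * (j : ℝ) + x) ^ 2 - 1 = (2 * (j : ℝ) + x - 1) * (2 * (j : ℝ) + x + 1) := by
      ring
    rw [e1, e2, h3]
    field_simp
    all_goals linarith
  rw [Finset.sum_congr rfl heq, ← Finset.mul_sum]
  have := tele_int h a hnn hmono P hP
  have h0 : h a = 1 / (2 * (a : ℝ) + x - 1) := rfl
  calc (1 / 2 : ℝ) * ∑ j ∈ P, (h j - h (j + 1)) ≤ (1 / 2) * h a := by linarith
    _ = 1 / (2 * (2 * (a : ℝ) + x - 1)) := by
        rw [h0]; field_simp
        all_goals ring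

end aux

section fixed

variable {β x : ℝ} (hβ0 : 0 < β) (hβ1 : β < 1) (hx1 : -1 < x) (hx2 : x < 1)

/-- denominator positivity -/
lemma den_pos {β x : ℝ} (hβ0 : 0 < β) (hβ1 : β < 1) (hx1 : -1 < x) (hx2 : x < 1)
    {j : ℤ} (hj : j ≠ 0) : 0 < (2 * (j : ℝ) + x) ^ 2 - β ^ 2 := by
  have h1 := sq_gt_one' hx1 hx2 hj
  nlinarith

/-- bound of β-terms by 1-terms -/
lemma term_le_one_term {β x : ℝ} (hβ0 : 0 < β) (hβ1 : β < 1) (hx1 : -1 < x) (hx2 : x < 1)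
    {j : ℤ} (hj : j ≠ 0) :
    1 / ((2 * (j : ℝ) + x) ^ 2 - β ^ 2) ≤ 1 / ((2 * (j : ℝ) + x) ^ 2 - 1) := by
  have h1 := sq_gt_one' hx1 hx2 hj
  apply one_div_le_one_div_of_le (by linarith)
  nlinarith

/-- Finite-sum bound A : `∑_{j ∈ T} 1/((2j+x)²-1) ≤ 1/(1-x²)` for `T` avoiding `0`
    — actually we prove it for the β-version directly. -/
lemma finZ_one {x : ℝ} (hx1 : -1 < x) (hx2 : x < 1) (T : Finset ℤ) (hT : ∀ j ∈ T, j ≠ 0)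
    (a : ℤ) (ha : 1 ≤ a) (hTa : ∀ j ∈ T, a ≤ j ∨ j ≤ -a) :
    ∑ j ∈ T, 1 / ((2 * (j : ℝ) + x) ^ 2 - 1) ≤
      1 / (2 * (2 * (a : ℝ) + x - 1)) + 1 / (2 * (2 * (a : ℝ) - x - 1)) := by
  classical
  rw [← Finset.sum_filter_add_sum_filter_not T (fun j => 0 < j)]
  have hpos : ∑ j ∈ T.filter (fun j => 0 < j), 1 / ((2 * (j : ℝ) + x) ^ 2 - 1) ≤
      1 / (2 * (2 * (a : ℝ) + x - 1)) := by
    apply keyfin hx1 hx2 a ha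
    intro j hj
    have h1 := (Finset.mem_filter.1 hj).2
    have h2 := hTa j (Finset.mem_filter.1 hj).1
    omega
  have hneg : ∑ j ∈ T.filter (fun j => ¬ 0 < j), 1 / ((2 * (j : ℝ) + x) ^ 2 - 1) ≤
      1 / (2 * (2 * (a : ℝ) + (-x) - 1)) := by
    set s := T.filter (fun j => ¬ 0 < j) with hs
    have hinj : ∀ u ∈ s, ∀ v ∈ s, -u = -v → u = v := by intro u _ v _ h; omega
    have himg := Finset.sum_image (s := s) (g := fun j : ℤ => -j)
      (f := fun k : ℤ => 1 / ((2 * (k : ℝ) + (-x)) ^ 2 - 1)) hinj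
    have hcong : ∑ j ∈ s, 1 / ((2 * (j : ℝ) + x) ^ 2 - 1)
        = ∑ j ∈ s, (fun k : ℤ => 1 / ((2 * (k : ℝ) + (-x)) ^ 2 - 1)) (-j) := by
      apply Finset.sum_congr rfl
      intro j _
      simp only []
      congr 1
      push_cast
      ring
    rw [hcong, ← himg]
    apply keyfin (by linarith) (by linarith) a ha
    intro k hk
    simp only [Finset.mem_image, hs, Finset.mem_filter] at hk
    obtain ⟨j, ⟨hjT, hj0⟩, rfl⟩ := hk
    have := hTa j hjT
    have := hT j hjT
    omega
  have : 1 / (2 * (2 * (a : ℝ) + (-x) - 1)) = 1 / (2 * (2 * (a : ℝ) - x - 1)) := by ring_nf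
  linarith

/-- Finite sum bound A over the subtype index. -/
lemma finA {β x : ℝ} (hβ0 : 0 < β) (hβ1 : β < 1) (hx1 : -1 < x) (hx2 : x < 1)
    (S : Finset {j : ℤ // j ≠ 0}) :
    ∑ j ∈ S, 1 / ((2 * ((j : ℤ) : ℝ) + x) ^ 2 - β ^ 2) ≤ 1 / (1 - x ^ 2) := by
  classical
  have hinj : ∀ u ∈ S, ∀ v ∈ S, (u : ℤ) = (v : ℤ) → u = v := fun u _ v _ h => Subtype.ext h
  have himg := Finset.sum_image (s := S) (g := fun j : {j : ℤ // j ≠ 0} => (j : ℤ))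
    (f := fun t : ℤ => 1 / ((2 * (t : ℝ) + x) ^ 2 - β ^ 2)) hinj
  rw [show ∑ j ∈ S, 1 / ((2 * ((j : ℤ) : ℝ) + x) ^ 2 - β ^ 2)
      = ∑ j ∈ S, (fun t : ℤ => 1 / ((2 * (t : ℝ) + x) ^ 2 - β ^ 2)) ((j : ℤ)) from rfl, ← himg]
  set T := S.image (fun j : {j : ℤ // j ≠ 0} => (j : ℤ)) with hT
  have hT0 : ∀ t ∈ T, t ≠ 0 := by
    intro t ht
    simp only [hT, Finset.mem_image] at ht
    obtain ⟨j, _, rfl⟩ := ht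
    exact j.2
  have hstep : ∑ t ∈ T, 1 / ((2 * (t : ℝ) + x) ^ 2 - β ^ 2)
      ≤ ∑ t ∈ T, 1 / ((2 * (t : ℝ) + x) ^ 2 - 1) := by
    apply Finset.sum_le_sum
    intro t ht
    exact term_le_one_term hβ0 hβ1 hx1 hx2 (hT0 t ht)
  have hone := finZ_one hx1 hx2 T hT0 1 le_rfl (by intro t ht; have := hT0 t ht; omega)
  have hx1' : (0:ℝ) < 1 + x := by linarith
  have hx2' : (0:ℝ) < 1 - x := by linarith
  have heq : 1 / (2 * (2 * ((1:ℤ) : ℝ) + x - 1)) + 1 / (2 * (2 * ((1:ℤ) : ℝ) - x - 1))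
      = 1 / (1 - x ^ 2) := by
    push_cast
    rw [show 2 * (2 * (1:ℝ) + x - 1) = 2 * (1 + x) by ring,
      show 2 * (2 * (1:ℝ) - x - 1) = 2 * (1 - x) by ring]
    have hne1 : (2 * (1 + x)) ≠ 0 := by positivity
    have hne2 : (2 * (1 - x)) ≠ 0 := by positivity
    have hne3 : (1 - x ^ 2) ≠ 0 := by nlinarith
    rw [div_add_div _ _ hne1 hne2, div_eq_div_iff (by positivity) hne3]
    ring
  calc ∑ t ∈ T, (fun t : ℤ => 1 / ((2 * (t : ℝ) + x) ^ 2 - β ^ 2)) t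
      ≤ ∑ t ∈ T, 1 / ((2 * (t : ℝ) + x) ^ 2 - 1) := hstep
    _ ≤ _ := hone
    _ = 1 / (1 - x ^ 2) := heq

/-- Finite sum bound B (uniform in `x`) over the subtype index. -/
lemma finB {β x : ℝ} (hβ0 : 0 < β) (hβ1 : β < 1) (hx1 : -1 < x) (hx2 : x < 1)
    (S : Finset {j : ℤ // j ≠ 0}) :
    ∑ j ∈ S, 1 / ((2 * ((j : ℤ) : ℝ) + x) ^ 2 - β ^ 2) ≤ 2 / (1 - β) := by
  classical
  have hinj : ∀ u ∈ S, ∀ v ∈ S, (u : ℤ) = (v : ℤ) → u = v := fun u _ v _ h => Subtype.ext h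
  have himg := Finset.sum_image (s := S) (g := fun j : {j : ℤ // j ≠ 0} => (j : ℤ))
    (f := fun t : ℤ => 1 / ((2 * (t : ℝ) + x) ^ 2 - β ^ 2)) hinj
  rw [show ∑ j ∈ S, 1 / ((2 * ((j : ℤ) : ℝ) + x) ^ 2 - β ^ 2)
      = ∑ j ∈ S, (fun t : ℤ => 1 / ((2 * (t : ℝ) + x) ^ 2 - β ^ 2)) ((j : ℤ)) from rfl, ← himg]
  set T := S.image (fun j : {j : ℤ // j ≠ 0} => (j : ℤ)) with hT
  have hT0 : ∀ t ∈ T, t ≠ 0 := by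
    intro t ht
    simp only [hT, Finset.mem_image] at ht
    obtain ⟨j, _, rfl⟩ := ht
    exact j.2
  have hb2 : (0:ℝ) < 1 - β ^ 2 := by nlinarith
  have hb : (0:ℝ) < 1 - β := by linarith
  set f : ℤ → ℝ := fun t => 1 / ((2 * (t : ℝ) + x) ^ 2 - β ^ 2) with hf
  have hfnn : ∀ t : ℤ, t ≠ 0 → 0 ≤ f t := by
    intro t ht
    exact le_of_lt (one_div_pos.2 (den_pos hβ0 hβ1 hx1 hx2 ht))
  rw [← Finset.sum_filter_add_sum_filter_not T (fun t => t = 1 ∨ t = -1)]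
  have hones : ∑ t ∈ T.filter (fun t => t = 1 ∨ t = -1), f t ≤ 1 / (1 - β ^ 2) + 1 / 3 := by
    have hsub : T.filter (fun t => t = 1 ∨ t = -1) ⊆ ({1, -1} : Finset ℤ) := by
      intro t ht
      have := (Finset.mem_filter.1 ht).2
      simp only [Finset.mem_insert, Finset.mem_singleton]
      tauto
    have h1 : ∑ t ∈ T.filter (fun t => t = 1 ∨ t = -1), f t ≤ ∑ t ∈ ({1, -1} : Finset ℤ), f t := by
      apply Finset.sum_le_sum_of_subset_of_nonneg hsub
      intro t ht _
      apply hfnn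
      simp only [Finset.mem_insert, Finset.mem_singleton] at ht
      rcases ht with rfl | rfl <;> norm_num
    have hpair : ∑ t ∈ ({1, -1} : Finset ℤ), f t = f 1 + f (-1) :=
      Finset.sum_pair (by norm_num)
    have hval : f 1 + f (-1) ≤ 1 / (1 - β ^ 2) + 1 / 3 := by
      have e1 : f 1 = 1 / ((2 + x) ^ 2 - β ^ 2) := by
        simp only [hf]; norm_num
      have e2 : f (-1) = 1 / ((x - 2) ^ 2 - β ^ 2) := by
        simp only [hf]; push_cast; ring_nf
      have hq1 : (0:ℝ) < (2 + x) ^ 2 - β ^ 2 := by nlinarith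
      have hq2 : (0:ℝ) < (x - 2) ^ 2 - β ^ 2 := by nlinarith
      rcases le_or_gt 0 x with hx0 | hx0
      · have b1 : f 1 ≤ 1 / 3 := by
          rw [e1]
          apply one_div_le_one_div_of_le (by norm_num)
          nlinarith
        have b2 : f (-1) ≤ 1 / (1 - β ^ 2) := by
          rw [e2]
          apply one_div_le_one_div_of_le hb2
          nlinarith
        linarith
      · have b1 : f 1 ≤ 1 / (1 - β ^ 2) := by
          rw [e1]
          apply one_div_le_one_div_of_le hb2
          nlinarith
        have b2 : f (-1) ≤ 1 / 3 := by
          rw [e2]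
          apply one_div_le_one_div_of_le (by norm_num)
          nlinarith
        linarith
    calc ∑ t ∈ T.filter (fun t => t = 1 ∨ t = -1), f t ≤ ∑ t ∈ ({1, -1} : Finset ℤ), f t := h1
      _ = f 1 + f (-1) := hpair
      _ ≤ 1 / (1 - β ^ 2) + 1 / 3 := hval
  have hrest : ∑ t ∈ T.filter (fun t => ¬(t = 1 ∨ t = -1)), f t ≤ 1 / 2 := by
    set R := T.filter (fun t => ¬(t = 1 ∨ t = -1)) with hR
    have hR0 : ∀ t ∈ R, t ≠ 0 := fun t ht => hT0 t (Finset.mem_filter.1 ht).1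
    have hRa : ∀ t ∈ R, 2 ≤ t ∨ t ≤ -2 := by
      intro t ht
      have h1 := (Finset.mem_filter.1 ht).2
      have h2 := hR0 t ht
      omega
    have hstep : ∑ t ∈ R, f t ≤ ∑ t ∈ R, 1 / ((2 * (t : ℝ) + x) ^ 2 - 1) := by
      apply Finset.sum_le_sum
      intro t ht
      exact term_le_one_term hβ0 hβ1 hx1 hx2 (hR0 t ht)
    have hone := finZ_one hx1 hx2 R hR0 2 (by norm_num) hRa
    have e3 : 1 / (2 * (2 * ((2:ℤ) : ℝ) + x - 1)) ≤ 1 / 4 := by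
      push_cast
      apply one_div_le_one_div_of_le (by norm_num)
      linarith
    have e4 : 1 / (2 * (2 * ((2:ℤ) : ℝ) - x - 1)) ≤ 1 / 4 := by
      push_cast
      apply one_div_le_one_div_of_le (by norm_num)
      linarith
    calc ∑ t ∈ R, f t ≤ ∑ t ∈ R, 1 / ((2 * (t : ℝ) + x) ^ 2 - 1) := hstep
      _ ≤ _ := hone
      _ ≤ 1 / 4 + 1 / 4 := by linarith
      _ = 1 / 2 := by norm_num
  have hfinal : 1 / (1 - β ^ 2) + 1 / 3 + 1 / 2 ≤ 2 / (1 - β) := by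
    have h1 : 1 / (1 - β ^ 2) + (1 + 2 * β) / (1 - β ^ 2) = 2 / (1 - β) := by
      rw [← add_div, div_eq_div_iff (ne_of_gt hb2) (ne_of_gt hb)]
      ring
    have h2 : (5/6 : ℝ) ≤ (1 + 2 * β) / (1 - β ^ 2) := by
      rw [le_div_iff₀ hb2]
      nlinarith
    linarith
  linarith

/-- positivity/summability of the base family. -/
lemma base_summable {β x : ℝ} (hβ0 : 0 < β) (hβ1 : β < 1) (hx1 : -1 < x) (hx2 : x < 1) :
    Summable (fun j : {j : ℤ // j ≠ 0} => 1 / ((2 * ((j : ℤ) : ℝ) + x) ^ 2 - β ^ 2)) := by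
  have h0 : Summable (fun n : ℤ => 1 / (n : ℝ) ^ 2) :=
    Real.summable_one_div_int_pow.2 one_lt_two
  have hmaj : Summable (fun j : {j : ℤ // j ≠ 0} =>
      (1 / (1 - β ^ 2)) * (1 / ((j : ℤ) : ℝ) ^ 2)) :=
    (h0.comp_injective Subtype.val_injective).mul_left _
  apply Summable.of_nonneg_of_le _ _ hmaj
  · intro j
    exact le_of_lt (one_div_pos.2 (den_pos hβ0 hβ1 hx1 hx2 j.2))
  · intro j
    have hd := den_pos hβ0 hβ1 hx1 hx2 j.2
    have hsq := sq_ge_sq' hx1 hx2 j.2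
    have hb2 : (0:ℝ) < 1 - β ^ 2 := by nlinarith
    have hj1 : 1 ≤ ((j : ℤ) : ℝ) ^ 2 := by
      have hj := j.2
      rcases lt_or_gt_of_ne hj with h | h
      · have hj' : ((j:ℤ) : ℝ) ≤ -1 := by exact_mod_cast (by omega : (j:ℤ) ≤ -1)
        nlinarith
      · have hj' : (1 : ℝ) ≤ ((j:ℤ) : ℝ) := by exact_mod_cast h
        nlinarith
    have hprod : (0:ℝ) < (1 - β ^ 2) * ((j : ℤ) : ℝ) ^ 2 := by nlinarith
    have key : (1 - β ^ 2) * ((j : ℤ) : ℝ) ^ 2 ≤ (2 * ((j : ℤ) : ℝ) + x) ^ 2 - β ^ 2 := by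
      nlinarith
    calc 1 / ((2 * ((j : ℤ) : ℝ) + x) ^ 2 - β ^ 2)
        ≤ 1 / ((1 - β ^ 2) * ((j : ℤ) : ℝ) ^ 2) := one_div_le_one_div_of_le hprod key
      _ = (1 / (1 - β ^ 2)) * (1 / ((j : ℤ) : ℝ) ^ 2) := by
          rw [one_div_mul_one_div]

lemma arg_mem {β x : ℝ} (hβ0 : 0 < β) (hβ1 : β < 1) (hx1 : -1 < x) (hx2 : x < 1)
    (j : {j : ℤ // j ≠ 0}) :
    -1 < -β / (2 * ((j : ℤ) : ℝ) + x) ∧ -β / (2 * ((j : ℤ) : ℝ) + x) < 1 := by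
  have h1 := sq_gt_one' hx1 hx2 j.2
  have hd2 : (0:ℝ) < (2 * ((j : ℤ) : ℝ) + x) ^ 2 := by nlinarith
  have habs : (-β / (2 * ((j : ℤ) : ℝ) + x)) ^ 2 < 1 := by
    rw [div_pow, div_lt_one hd2]
    nlinarith
  have := abs_lt.1 (((sq_lt_one_iff_abs_lt_one _).1 habs))
  exact this

lemma term_id {β x : ℝ} (hβ0 : 0 < β) (hβ1 : β < 1) (hx1 : -1 < x) (hx2 : x < 1)
    (j : {j : ℤ // j ≠ 0}) (M : ℝ) :
    (β / (2 * ((j : ℤ) : ℝ) + x) ^ 2) * (M * (1 / (1 - (-β / (2 * ((j : ℤ) : ℝ) + x)) ^ 2)))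
      = (M * β) * (1 / ((2 * ((j : ℤ) : ℝ) + x) ^ 2 - β ^ 2)) := by
  have h1 := sq_gt_one' hx1 hx2 j.2
  have hd : (2 * ((j : ℤ) : ℝ) + x) ≠ 0 := by
    intro h
    rw [h] at h1
    norm_num at h1
  have hden := den_pos hβ0 hβ1 hx1 hx2 j.2
  have hden' : ((2 * ((j : ℤ) : ℝ) + x) ^ 2 - β ^ 2) ≠ 0 := ne_of_gt hden
  have h2 : 1 - (-β / (2 * ((j : ℤ) : ℝ) + x)) ^ 2
      = ((2 * ((j : ℤ) : ℝ) + x) ^ 2 - β ^ 2) / (2 * ((j : ℤ) : ℝ) + x) ^ 2 := by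
    field_simp
  rw [h2, one_div_div]
  field_simp

/-- Main single-application estimate. -/
lemma step_bound {β x : ℝ} (hβ0 : 0 < β) (hβ1 : β < 1) (hx1 : -1 < x) (hx2 : x < 1)
    (F : ℝ → ℝ) (M : ℝ) (hM : 0 ≤ M)
    (hF : ∀ y, -1 < y → y < 1 → 0 ≤ F y ∧ F y ≤ M * (1 / (1 - y ^ 2))) :
    Summable (fun j : {j : ℤ // j ≠ 0} =>
        (β / (2 * ((j : ℤ) : ℝ) + x) ^ 2) * F (-β / (2 * ((j : ℤ) : ℝ) + x)))
      ∧ 0 ≤ Tsub β F x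
      ∧ Tsub β F x ≤ (M * β) * (1 / (1 - x ^ 2))
      ∧ Tsub β F x ≤ (M * β) * (2 / (1 - β)) := by
  set t : {j : ℤ // j ≠ 0} → ℝ := fun j =>
    (β / (2 * ((j : ℤ) : ℝ) + x) ^ 2) * F (-β / (2 * ((j : ℤ) : ℝ) + x)) with ht
  set b : {j : ℤ // j ≠ 0} → ℝ := fun j =>
    1 / ((2 * ((j : ℤ) : ℝ) + x) ^ 2 - β ^ 2) with hb
  have hco : ∀ j : {j : ℤ // j ≠ 0}, 0 ≤ β / (2 * ((j : ℤ) : ℝ) + x) ^ 2 := by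
    intro j
    have h1 := sq_gt_one' hx1 hx2 j.2
    have : (0:ℝ) < (2 * ((j : ℤ) : ℝ) + x) ^ 2 := by nlinarith
    positivity
  have h0 : ∀ j, 0 ≤ t j := by
    intro j
    obtain ⟨hy1, hy2⟩ := arg_mem hβ0 hβ1 hx1 hx2 j
    exact mul_nonneg (hco j) (hF _ hy1 hy2).1
  have hle : ∀ j, t j ≤ (M * β) * b j := by
    intro j
    obtain ⟨hy1, hy2⟩ := arg_mem hβ0 hβ1 hx1 hx2 j
    calc t j ≤ (β / (2 * ((j : ℤ) : ℝ) + x) ^ 2)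
          * (M * (1 / (1 - (-β / (2 * ((j : ℤ) : ℝ) + x)) ^ 2))) :=
        mul_le_mul_of_nonneg_left (hF _ hy1 hy2).2 (hco j)
      _ = (M * β) * b j := term_id hβ0 hβ1 hx1 hx2 j M
  have hbsum := base_summable hβ0 hβ1 hx1 hx2
  have hmaj : Summable (fun j => (M * β) * b j) := hbsum.mul_left _
  have hsum : Summable t := Summable.of_nonneg_of_le h0 hle hmaj
  have hTsub : Tsub β F x = ∑' j, t j := rfl
  have hb_nonneg : 0 ≤ M * β := mul_nonneg hM (le_of_lt hβ0)
  have htsumA : ∑' j, t j ≤ (M * β) * (1 / (1 - x ^ 2)) := by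
    calc ∑' j, t j ≤ ∑' j, (M * β) * b j := Summable.tsum_le_tsum hle hsum hmaj
      _ = (M * β) * ∑' j, b j := tsum_mul_left
      _ ≤ (M * β) * (1 / (1 - x ^ 2)) := by
          apply mul_le_mul_of_nonneg_left _ hb_nonneg
          exact Summable.tsum_le_of_sum_le hbsum (fun S => finA hβ0 hβ1 hx1 hx2 S)
  have htsumB : ∑' j, t j ≤ (M * β) * (2 / (1 - β)) := by
    calc ∑' j, t j ≤ ∑' j, (M * β) * b j := Summable.tsum_le_tsum hle hsum hmaj
      _ = (M * β) * ∑' j, b j := tsum_mul_left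
      _ ≤ (M * β) * (2 / (1 - β)) := by
          apply mul_le_mul_of_nonneg_left _ hb_nonneg
          exact Summable.tsum_le_of_sum_le hbsum (fun S => finB hβ0 hβ1 hx1 hx2 S)
  exact ⟨hsum, hTsub ▸ tsum_nonneg h0, hTsub ▸ htsumA, hTsub ▸ htsumB⟩

/-- The iterates satisfy the pointwise bound `0 ≤ T^n κ₁ ≤ βⁿ κ₁`. -/
lemma iter_bound {β : ℝ} (hβ0 : 0 < β) (hβ1 : β < 1) :
    ∀ n : ℕ, ∀ y : ℝ, -1 < y → y < 1 →
      0 ≤ (Tsub β)^[n] (fun y => 1 / (1 - y ^ 2)) y ∧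
      (Tsub β)^[n] (fun y => 1 / (1 - y ^ 2)) y ≤ β ^ n * (1 / (1 - y ^ 2)) := by
  intro n
  induction n with
  | zero =>
    intro y hy1 hy2
    have h1 : (0:ℝ) < 1 - y ^ 2 := by nlinarith
    simp only [Function.iterate_zero, id_eq, pow_zero, one_mul]
    exact ⟨by positivity, le_rfl⟩
  | succ n ih =>
    intro y hy1 hy2
    rw [Function.iterate_succ_apply']
    obtain ⟨-, h0, hA, -⟩ := step_bound hβ0 hβ1 hy1 hy2
      ((Tsub β)^[n] (fun y => 1 / (1 - y ^ 2))) (β ^ n) (pow_nonneg (le_of_lt hβ0) n) ih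
    refine ⟨h0, ?_⟩
    calc Tsub β ((Tsub β)^[n] (fun y => 1 / (1 - y ^ 2))) y
        ≤ (β ^ n * β) * (1 / (1 - y ^ 2)) := hA
      _ = β ^ (n + 1) * (1 / (1 - y ^ 2)) := by rw [pow_succ β n]

end fixed

/-- Uniform geometric bound for the `T_β`-iterates of `κ₁(x) = 1/(1-x²)`
when `0 < β < 1`. -/
theorem stmt_17 (β : ℝ) (hβ0 : 0 < β) (hβ1 : β < 1) :
    ∀ n : ℕ, 1 ≤ n →
      (∀ k : ℕ, k < n → ∀ x ∈ Set.Ioo (-1 : ℝ) 1,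
        Summable fun j : {j : ℤ // j ≠ 0} =>
          (β / (2 * ((j : ℤ) : ℝ) + x) ^ 2) *
            ((Tsub β)^[k] (fun y => 1 / (1 - y ^ 2))) (-β / (2 * ((j : ℤ) : ℝ) + x))) ∧
      ∀ x ∈ Set.Ioo (-1 : ℝ) 1,
        (Tsub β)^[n] (fun y => 1 / (1 - y ^ 2)) x ≤ 2 * β ^ n / (1 - β) := by
  intro n hn
  constructor
  · intro k _ x hx
    exact (step_bound hβ0 hβ1 hx.1 hx.2 ((Tsub β)^[k] (fun y => 1 / (1 - y ^ 2)))
      (β ^ k) (pow_nonneg (le_of_lt hβ0) k) (iter_bound hβ0 hβ1 k)).1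
  · intro x hx
    obtain ⟨m, rfl⟩ : ∃ m, n = m + 1 := ⟨n - 1, (Nat.succ_pred_eq_of_pos hn).symm⟩
    rw [Function.iterate_succ_apply']
    have hB := (step_bound hβ0 hβ1 hx.1 hx.2 ((Tsub β)^[m] (fun y => 1 / (1 - y ^ 2)))
      (β ^ m) (pow_nonneg (le_of_lt hβ0) m) (iter_bound hβ0 hβ1 m)).2.2.2
    calc Tsub β ((Tsub β)^[m] (fun y => 1 / (1 - y ^ 2))) x
        ≤ (β ^ m * β) * (2 / (1 - β)) := hB
      _ = 2 * β ^ (m + 1) / (1 - β) := by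
          rw [pow_succ β m]
          ring
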